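/- arXiv:1601.04493 — 3 statements merged into one kernel-verified Lean document; each statement's English description precedes it below -/
import Mathlib

section
/- Let N be a positive integer and suppose g : [0,N] → ℝ has a continuous derivative on (0,N) satisfying 0 < μ ≤ g'(x) ≤ A₀·μ for all x ∈ (0,N). Then for any θ ≥ 0, the number of positive integers n ≤ N with ‖g(n)‖ ≤ θ is at most C·(1 + A₀ μ N)(1 + μ^{−1} θ), where C is an absolute constant. -/
open Finset

/-- `‖θ‖`: the distance from `θ` to the nearest integer. -/
noncomputable def distNearestInt (θ : ℝ) : ℝ := |θ - round θ|

set_option maxHeartbeats 1000000 in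
/-- **Lemma 2 (spacing lemma)**: let `N` be a positive integer and `g : [0,N] → ℝ` have a
continuous derivative on `(0,N)` with `0 < μ ≤ g'(x) ≤ A₀ μ` there.  Then for any `θ ≥ 0`,
`#{n ≤ N : ‖g(n)‖ ≤ θ} ≤ C (1 + A₀ μ N)(1 + μ⁻¹ θ)` with an absolute constant `C`. -/
theorem spacing_lemma : ∃ C : ℝ, 0 < C ∧
    ∀ (N : ℕ) (g g' : ℝ → ℝ) (μ A₀ θ : ℝ),
      0 < N → 0 < μ → 0 ≤ θ →
      (∀ x ∈ Set.Ioo (0 : ℝ) (N : ℝ), HasDerivAt g (g' x) x) →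
      ContinuousOn g' (Set.Ioo (0 : ℝ) (N : ℝ)) →
      (∀ x ∈ Set.Ioo (0 : ℝ) (N : ℝ), μ ≤ g' x ∧ g' x ≤ A₀ * μ) →
      ((Nat.card {n : ℕ | 1 ≤ n ∧ n ≤ N ∧ distNearestInt (g n) ≤ θ} : ℕ) : ℝ) ≤
        C * (1 + A₀ * μ * N) * (1 + μ⁻¹ * θ) := by
  refine ⟨16, by norm_num, ?_⟩
  intro N g g' μ A₀ θ hN hμ hθ hg hg' hbound
  have hN1 : (1 : ℝ) ≤ N := by exact_mod_cast hN
  have hhalf : (1/2 : ℝ) ∈ Set.Ioo (0:ℝ) (N:ℝ) := ⟨by norm_num, by linarith⟩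
  have hA₀ : 1 ≤ A₀ := by
    obtain ⟨h1, h2⟩ := hbound _ hhalf
    nlinarith
  have hY : 0 ≤ μ⁻¹ * θ := by positivity
  have hX : 0 ≤ A₀ * μ * N := by positivity
  -- the finset of solutions
  set T : Finset ℕ := (Finset.Icc 1 N).filter (fun n => distNearestInt (g n) ≤ θ) with hT
  have hcard : (Nat.card {n : ℕ | 1 ≤ n ∧ n ≤ N ∧ distNearestInt (g n) ≤ θ}) = T.card := by
    have : {n : ℕ | 1 ≤ n ∧ n ≤ N ∧ distNearestInt (g n) ≤ θ} = ↑T := by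
      ext n; simp [hT, and_assoc]
    rw [this, Nat.card_coe_set_eq, Set.ncard_coe_finset]
  rw [hcard]
  -- mean value estimates
  have mvt : ∀ a b : ℝ, 1 ≤ a → a < b → b ≤ (N:ℝ) - 1 →
      μ * (b - a) ≤ g b - g a ∧ g b - g a ≤ A₀ * μ * (b - a) := by
    intro a b ha hab hb
    have hsub : Set.Icc a b ⊆ Set.Ioo (0:ℝ) (N:ℝ) := by
      intro x hx
      exact ⟨by linarith [hx.1], by linarith [hx.2]⟩
    obtain ⟨c, hc, hslope⟩ := exists_hasDerivAt_eq_slope g g' hab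
      (fun x hx => (hg x (hsub hx)).continuousAt.continuousWithinAt)
      (fun x hx => hg x (hsub (Set.Ioo_subset_Icc_self hx)))
    obtain ⟨h1, h2⟩ := hbound c (hsub (Set.Ioo_subset_Icc_self hc))
    have hba : (0:ℝ) < b - a := by linarith
    have heq : g b - g a = g' c * (b - a) := by
      rw [hslope]; field_simp
    constructor <;> nlinarith
  -- restrict to n ≤ N - 1
  set T' : Finset ℕ := (Finset.Icc 1 (N-1)).filter (fun n => distNearestInt (g n) ≤ θ)
    with hT'
  have hTT' : T ⊆ insert N T' := by
    intro n hn
    simp only [hT, Finset.mem_filter, Finset.mem_Icc] at hn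
    rcases eq_or_lt_of_le hn.1.2 with h | h
    · simp [h]
    · refine Finset.mem_insert_of_mem ?_
      simp only [hT', Finset.mem_filter, Finset.mem_Icc]
      exact ⟨⟨hn.1.1, by omega⟩, hn.2⟩
  have hcard1 : T.card ≤ T'.card + 1 :=
    le_trans (Finset.card_le_card hTT') (Finset.card_insert_le _ _)
  rcases eq_or_lt_of_le (show 1 ≤ N from hN) with hNone | hN2
  · -- N = 1
    have hsub : T ⊆ Finset.Icc 1 N := Finset.filter_subset _ _
    have : T.card ≤ 1 := by
      have := Finset.card_le_card hsub
      simpa [← hNone] using this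
    have h1 : (T.card : ℝ) ≤ 1 := by exact_mod_cast this
    have hprod : (1:ℝ) * 1 ≤ (1 + A₀ * μ * N) * (1 + μ⁻¹ * θ) :=
      mul_le_mul (by linarith) (by linarith) (by norm_num) (by linarith)
    rw [one_mul] at hprod
    have hgoal : (16:ℝ) * (1 + A₀ * μ * N) * (1 + μ⁻¹ * θ)
        = 16 * ((1 + A₀ * μ * N) * (1 + μ⁻¹ * θ)) := by ring
    rw [hgoal]
    linarith
  have hN2real : (1:ℝ) ≤ (N:ℝ) - 1 := by
    have : (2:ℝ) ≤ (N:ℝ) := by exact_mod_cast hN2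
    linarith
  -- the injection data
  set m₁ : ℤ := ⌊g 1⌋ - 1 with hm₁
  set m₂ : ℤ := ⌈g ((N:ℝ) - 1)⌉ + 1 with hm₂
  set K : ℤ := ⌊2 * θ / μ⌋ with hK
  set F : Finset (ℤ × ℤ) := Finset.Icc m₁ m₂ ×ˢ Finset.Icc 0 (K+1) with hF
  set f : ℕ → ℤ × ℤ := fun n =>
    (round (g n), ⌊g n / μ⌋ - ⌊((round (g n) : ℝ) - θ) / μ⌋) with hf
  have hmem : ∀ n ∈ T', 1 ≤ n ∧ (n:ℝ) ≤ (N:ℝ) - 1 ∧ |g n - round (g n)| ≤ θ := by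
    intro n hn
    simp only [hT', Finset.mem_filter, Finset.mem_Icc] at hn
    refine ⟨hn.1.1, ?_, hn.2⟩
    have h1 : n ≤ N - 1 := hn.1.2
    have hN2 : 1 ≤ N := hN
    have h2 : (n:ℝ) ≤ ((N-1 : ℕ) : ℝ) := by exact_mod_cast h1
    rw [Nat.cast_sub (by omega)] at h2
    push_cast at h2
    linarith
  have hgmono : ∀ a b : ℝ, 1 ≤ a → a ≤ b → b ≤ (N:ℝ) - 1 → g a ≤ g b := by
    intro a b ha hab hb
    rcases eq_or_lt_of_le hab with h | h
    · rw [h]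
    · nlinarith [(mvt a b ha h hb).1]
  have hmaps : ∀ n ∈ T', f n ∈ F := by
    intro n hn
    obtain ⟨h1, h2, h3⟩ := hmem n hn
    have h1' : (1:ℝ) ≤ (n:ℝ) := by exact_mod_cast h1
    have hg1 : g 1 ≤ g n := hgmono 1 n le_rfl h1' h2
    have hg2 : g n ≤ g ((N:ℝ)-1) := hgmono n ((N:ℝ)-1) h1' h2 le_rfl
    have hr := abs_le.1 (abs_sub_round (g n))
    have habs := abs_le.1 h3
    simp only [hF, hf, Finset.mem_product, Finset.mem_Icc]
    refine ⟨⟨?_, ?_⟩, ?_, ?_⟩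
    · have h : (m₁ : ℝ) ≤ (round (g n) : ℝ) := by
        have := Int.floor_le (g 1)
        push_cast [hm₁]
        linarith
      exact_mod_cast h
    · have h : (round (g n) : ℝ) ≤ (m₂ : ℝ) := by
        have := Int.le_ceil (g ((N:ℝ)-1))
        push_cast [hm₂]
        linarith
      exact_mod_cast h
    · have : ⌊((round (g n):ℝ) - θ) / μ⌋ ≤ ⌊g n / μ⌋ := by
        apply Int.floor_mono
        gcongr
        linarith [habs.1]
      omega
    · have hfu : ⌊g n / μ⌋ ≤ ⌊((round (g n):ℝ) + θ) / μ⌋ := by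
        apply Int.floor_mono
        gcongr
        linarith
      have hsplit : ((round (g n):ℝ) + θ) / μ
          = ((round (g n):ℝ) - θ) / μ + 2 * θ / μ := by ring
      have := Int.le_floor_add_floor (((round (g n):ℝ) - θ) / μ) (2 * θ / μ)
      rw [← hsplit] at this
      omega
  have hinj : ∀ a ∈ T', ∀ b ∈ T', f a = f b → a = b := by
    intro a ha b hb hab
    by_contra hne
    -- wlog a < b
    wlog hlt : a < b generalizing a b
    · exact this b hb a ha hab.symm (Ne.symm hne) (by omega)
    obtain ⟨ha1, ha2, _⟩ := hmem a ha
    obtain ⟨hb1, hb2, _⟩ := hmem b hb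
    have ha1' : (1:ℝ) ≤ (a:ℝ) := by exact_mod_cast ha1
    have hlt' : (a:ℝ) < (b:ℝ) := by exact_mod_cast hlt
    have hba1 : (1:ℝ) ≤ (b:ℝ) - (a:ℝ) := by
      have : (a:ℝ) + 1 ≤ (b:ℝ) := by exact_mod_cast Nat.succ_le_of_lt hlt
      linarith
    have hmvt := (mvt a b ha1' hlt' hb2).1
    -- same floor of g/μ
    have hround : round (g a) = round (g b) := congrArg Prod.fst hab
    have hfloor : ⌊g a / μ⌋ = ⌊g b / μ⌋ := by
      have h2 := congrArg Prod.snd hab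
      simp only [hf] at h2
      rw [hround] at h2
      omega
    have hfa := Int.floor_le (g a / μ)
    have hfb := Int.lt_floor_add_one (g b / μ)
    rw [← hfloor] at hfb
    have : g b / μ - g a / μ < 1 := by linarith
    have : g b - g a < μ := by
      rw [div_sub_div_same] at this
      calc g b - g a = (g b - g a) / μ * μ := by field_simp
      _ < 1 * μ := by exact mul_lt_mul_of_pos_right this hμ
      _ = μ := one_mul μ
    nlinarith
  have hcard2 : T'.card ≤ F.card := Finset.card_le_card_of_injOn f hmaps
    (fun a ha b hb h => hinj a ha b hb h)
  -- numeric bound on F.card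
  have hFcard : F.card = (m₂ + 1 - m₁).toNat * (K + 2).toNat := by
    simp only [hF, Finset.card_product, Int.card_Icc]
    congr 1
    omega
  -- real bounds
  have hKnn : 0 ≤ K := Int.floor_nonneg.2 (by positivity)
  have hm : (m₁ : ℝ) ≤ (m₂ : ℝ) + 1 := by
    have h1 := Int.floor_le (g 1)
    have h2 := Int.le_ceil (g ((N:ℝ)-1))
    have hg12 : g 1 ≤ g ((N:ℝ)-1) := hgmono 1 ((N:ℝ)-1) le_rfl (by linarith) le_rfl
    push_cast [hm₁, hm₂]
    linarith
  have hb1 : ((m₂ + 1 - m₁).toNat : ℝ) ≤ 5 * (1 + A₀ * μ * N) := by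
    have hnn : (0:ℤ) ≤ m₂ + 1 - m₁ := by
      exact_mod_cast (by push_cast; linarith : ((0:ℤ):ℝ) ≤ ((m₂ + 1 - m₁ : ℤ):ℝ))
    have htn : ((m₂ + 1 - m₁).toNat : ℝ) = (m₂:ℝ) + 1 - m₁ := by
      have h' := congrArg (fun z : ℤ => (z : ℝ)) (Int.toNat_of_nonneg hnn)
      push_cast at h'
      push_cast
      linarith
    rw [htn]
    have h1 := Int.floor_le (g 1)
    have h2 := Int.ceil_le_floor_add_one (g ((N:ℝ)-1))
    have h2' : (m₂ : ℝ) ≤ g ((N:ℝ)-1) + 2 := by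
      have := Int.ceil_lt_add_one (g ((N:ℝ)-1))
      push_cast [hm₂]; linarith
    have hgdiff : g ((N:ℝ)-1) - g 1 ≤ A₀ * μ * ((N:ℝ) - 2) := by
      rcases eq_or_lt_of_le hN2real with he | hl
      · have h0 : (N:ℝ) - 2 = 0 := by linarith
        rw [← he, h0, mul_zero, sub_self]
      · have := (mvt 1 ((N:ℝ)-1) le_rfl hl le_rfl).2
        linarith
    have hA₀μ : (0:ℝ) ≤ A₀ * μ := by positivity
    have hmul : A₀ * μ * ((N:ℝ) - 2) ≤ A₀ * μ * (N:ℝ) :=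
      mul_le_mul_of_nonneg_left (by linarith) hA₀μ
    have h1b := Int.lt_floor_add_one (g 1)
    push_cast [hm₁]
    linarith
  have hb2 : ((K + 2).toNat : ℝ) ≤ 3 * (1 + μ⁻¹ * θ) := by
    have htn : ((K + 2).toNat : ℝ) = (K:ℝ) + 2 := by
      have h' := congrArg (fun z : ℤ => (z : ℝ)) (Int.toNat_of_nonneg (add_nonneg hKnn (by norm_num : (0:ℤ) ≤ 2)))
      push_cast at h'
      push_cast
      linarith
    rw [htn]
    have h1 : (K:ℝ) ≤ 2 * θ / μ := Int.floor_le _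
    have h2 : 2 * θ / μ = 2 * (μ⁻¹ * θ) := by rw [div_eq_mul_inv]; ring
    rw [h2] at h1
    linarith
  -- final
  have hc : (T.card : ℝ) ≤ (T'.card : ℝ) + 1 := by exact_mod_cast hcard1
  have h3 : (T'.card : ℝ) ≤ ((m₂ + 1 - m₁).toNat : ℝ) * ((K + 2).toNat : ℝ) := by
    rw [← Nat.cast_mul, ← hFcard]
    exact_mod_cast hcard2
  have h4 : ((m₂ + 1 - m₁).toNat : ℝ) * ((K + 2).toNat : ℝ) ≤
      (5 * (1 + A₀ * μ * N)) * (3 * (1 + μ⁻¹ * θ)) := by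
    apply mul_le_mul hb1 hb2 (by positivity) (by positivity)
  have h5 : (T'.card : ℝ) ≤ 15 * ((1 + A₀ * μ * N) * (1 + μ⁻¹ * θ)) := by
    calc (T'.card : ℝ) ≤ (5 * (1 + A₀ * μ * N)) * (3 * (1 + μ⁻¹ * θ)) := le_trans h3 h4
    _ = 15 * ((1 + A₀ * μ * N) * (1 + μ⁻¹ * θ)) := by ring
  have hprod : (1:ℝ) * 1 ≤ (1 + A₀ * μ * N) * (1 + μ⁻¹ * θ) :=
    mul_le_mul (by linarith) (by linarith) (by norm_num) (by linarith)
  rw [one_mul] at hprod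
  have hgoal : (16:ℝ) * (1 + A₀ * μ * N) * (1 + μ⁻¹ * θ)
      = 16 * ((1 + A₀ * μ * N) * (1 + μ⁻¹ * θ)) := by ring
  rw [hgoal]
  linarith
end

section
/- Let k ≥ 2 be an integer, N ≥ 1, and suppose f : [0,N] → ℝ has continuous derivatives up to order k on (0,N), with 0 < λ_k ≤ f^{(k)}(x) ≤ A·λ_k for all x ∈ (0,N), where A ≥ 1 and A·λ_k ≤ 1/4. Put H = ⌊(Aλ_k)^{−1/k}⌋ and let 𝒩 be the number of pairs of positive integers m, n ≤ N such that ‖f^{(j)}(m)/j! − f^{(j)}(n)/j!‖ ≤ 2H^{−j} for every j with 1 ≤ j ≤ k−1. Then 𝒩 ≤ C·A²·(k−1)!·N·λ_k^{−1/k}·(1 + N λ_k), where C is an absolute constant. -/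
open Finset

lemma round_min (x : ℝ) (z : ℤ) : |x - (round x : ℝ)| ≤ |x - (z : ℝ)| := by
  by_cases h : z = round x
  · rw [h]
  · have h1 : |x - (round x : ℝ)| ≤ 1/2 := abs_sub_round x
    have h2 : (1:ℝ) ≤ |(round x : ℝ) - (z:ℝ)| := by
      have hne : round x - z ≠ 0 := sub_ne_zero.mpr (Ne.symm h)
      have h' := Int.one_le_abs hne
      have hc : ((|round x - z| : ℤ) : ℝ) = |(round x : ℝ) - (z:ℝ)| := by
        push_cast [Int.cast_abs]; ring_nf
      calc (1:ℝ) = ((1:ℤ):ℝ) := by norm_num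
        _ ≤ ((|round x - z| : ℤ) : ℝ) := by exact_mod_cast h'
        _ = |(round x : ℝ) - (z:ℝ)| := hc
    have h3 : |(round x : ℝ) - (z:ℝ)| ≤ |(round x:ℝ) - x| + |x - (z:ℝ)| := abs_sub_le _ _ _
    have h4 : |(round x:ℝ) - x| = |x - (round x:ℝ)| := abs_sub_comm _ _
    linarith

lemma two_pow_le_two_mul_factorial : ∀ m : ℕ, 2^m ≤ 2 * m.factorial := by
  intro m
  induction m with
  | zero => decide
  | succ n ih =>
    match n, ih with
    | 0, _ => decide
    | (n+1), ih =>
      have h2 : 2 * (n+1).factorial ≤ (n+2).factorial := by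
        rw [Nat.factorial_succ (n+1)]
        exact Nat.mul_le_mul_right _ (by omega)
      calc 2^(n+2) = 2 * 2^(n+1) := by ring
        _ ≤ 2 * (2 * (n+1).factorial) := by omega
        _ ≤ 2 * (n+2).factorial := by omega

lemma div_exp_pow_le_factorial : ∀ n : ℕ, ((n:ℝ)/Real.exp 1)^n ≤ n.factorial := by
  intro n
  induction n with
  | zero => simp
  | succ n ih =>
    have he : (0:ℝ) < Real.exp 1 := Real.exp_pos 1
    rcases Nat.eq_zero_or_pos n with h0 | hn
    · subst h0
      have h1e : (1:ℝ) ≤ Real.exp 1 := by nlinarith [Real.add_one_le_exp (1:ℝ)]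
      have hle : ((0+1:ℕ):ℝ) / Real.exp 1 ≤ 1 := by
        rw [div_le_one he]; push_cast; linarith
      calc (((0+1:ℕ):ℝ)/Real.exp 1)^(0+1) ≤ 1^(0+1) :=
            pow_le_pow_left₀ (by positivity) hle _
        _ = 1 := one_pow _
        _ ≤ _ := by
            have := Nat.one_le_iff_ne_zero.mpr (Nat.factorial_ne_zero (0+1))
            exact_mod_cast this
    · have hn' : (0:ℝ) < n := by exact_mod_cast hn
      have key : ((n:ℝ)+1)^n ≤ Real.exp 1 * (n:ℝ)^n := by
        have heq : (n:ℝ)*(1/(n:ℝ)+1) = (n:ℝ)+1 := by field_simp; ring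
        have h1 : (n:ℝ) + 1 ≤ (n:ℝ) * Real.exp (1/(n:ℝ)) := by
          rw [← heq]
          have := Real.add_one_le_exp (1/(n:ℝ))
          nlinarith [this]
        calc ((n:ℝ)+1)^n ≤ ((n:ℝ) * Real.exp (1/(n:ℝ)))^n := by
              apply pow_le_pow_left₀ (by positivity) h1
          _ = (n:ℝ)^n * Real.exp (1/(n:ℝ))^n := mul_pow _ _ _
          _ = (n:ℝ)^n * Real.exp ((n:ℝ) * (1/(n:ℝ))) := by rw [Real.exp_nat_mul]
          _ = (n:ℝ)^n * Real.exp 1 := by rw [mul_one_div_cancel (ne_of_gt hn')]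
          _ = Real.exp 1 * (n:ℝ)^n := by ring
      have step : (((n:ℝ)+1)/Real.exp 1)^(n+1) ≤ ((n:ℝ)+1) * ((n:ℝ)/Real.exp 1)^n := by
        have expand : (((n:ℝ)+1)/Real.exp 1)^(n+1)
            = (((n:ℝ)+1)/Real.exp 1) * ((((n:ℝ)+1))^n / (Real.exp 1)^n) := by
          rw [pow_succ, div_pow]; ring
        rw [expand]
        have hb : (((n:ℝ)+1))^n / (Real.exp 1)^n ≤ Real.exp 1 * ((n:ℝ)^n/(Real.exp 1)^n) := by
          rw [div_le_iff₀ (by positivity)]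
          calc ((n:ℝ)+1)^n ≤ Real.exp 1 * (n:ℝ)^n := key
            _ = Real.exp 1 * ((n:ℝ)^n/(Real.exp 1)^n) * (Real.exp 1)^n := by
                field_simp
        calc (((n:ℝ)+1)/Real.exp 1) * ((((n:ℝ)+1))^n / (Real.exp 1)^n)
            ≤ (((n:ℝ)+1)/Real.exp 1) * (Real.exp 1 * ((n:ℝ)^n/(Real.exp 1)^n)) := by
              apply mul_le_mul_of_nonneg_left hb (by positivity)
          _ = ((n:ℝ)+1) * ((n:ℝ)^n/(Real.exp 1)^n) := by field_simp
          _ = ((n:ℝ)+1) * ((n:ℝ)/Real.exp 1)^n := by rw [div_pow]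
      calc (((n+1:ℕ):ℝ)/Real.exp 1)^(n+1) = (((n:ℝ)+1)/Real.exp 1)^(n+1) := by push_cast; ring_nf
        _ ≤ ((n:ℝ)+1) * ((n:ℝ)/Real.exp 1)^n := step
        _ ≤ ((n:ℝ)+1) * n.factorial := by
            apply mul_le_mul_of_nonneg_left ih (by positivity)
        _ = ((n+1).factorial : ℝ) := by rw [Nat.factorial_succ]; push_cast; ring

lemma c2 (k H : ℕ) (hH : 1 ≤ H) (hk4 : 4*H ≤ k) :
    ((H:ℝ)+3)^(k-1) ≤ 16 * ((k-1).factorial : ℝ) := by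
  by_cases hsmall : k ≤ 28
  · have hH7 : H ≤ 7 := by omega
    have hnat : (H+3)^(k-1) ≤ 16 * (k-1).factorial := by
      interval_cases H <;> interval_cases k <;> decide
    calc ((H:ℝ)+3)^(k-1) = (((H+3:ℕ)):ℝ)^(k-1) := by push_cast; ring
      _ ≤ ((16 * (k-1).factorial : ℕ) : ℝ) := by
          exact_mod_cast hnat
      _ = 16 * ((k-1).factorial : ℝ) := by push_cast; ring
  · push_neg at hsmall
    have he : (0:ℝ) < Real.exp 1 := Real.exp_pos 1
    have hed : Real.exp 1 < 2.7182818286 := Real.exp_one_lt_d9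
    have hHk : (H:ℝ) ≤ (k:ℝ)/4 := by
      have : (4*H:ℕ) ≤ (k:ℕ) := hk4
      have := (Nat.cast_le (α := ℝ)).mpr this
      push_cast at this
      linarith
    have hk29 : (29:ℝ) ≤ (k:ℝ) := by exact_mod_cast hsmall
    have key : ((H:ℝ)+3) * Real.exp 1 ≤ (k:ℝ)-1 := by nlinarith
    have key2 : (H:ℝ)+3 ≤ ((k:ℝ)-1)/Real.exp 1 := by
      rw [le_div_iff₀ he]; linarith
    have hcast : ((k:ℝ)-1) = ((k-1:ℕ):ℝ) := by
      have : 1 ≤ k := by omega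
      push_cast [Nat.cast_sub this]; ring
    calc ((H:ℝ)+3)^(k-1) ≤ (((k-1:ℕ):ℝ)/Real.exp 1)^(k-1) := by
          apply pow_le_pow_left₀ (by positivity)
          rw [← hcast]; exact key2
      _ ≤ ((k-1).factorial : ℝ) := div_exp_pow_le_factorial (k-1)
      _ ≤ 16 * ((k-1).factorial : ℝ) := by
          have : (0:ℝ) ≤ ((k-1).factorial : ℝ) := by positivity
          linarith

set_option maxHeartbeats 1000000 in
lemma endgame (k H : ℕ) (N A lam : ℝ) (hk : 2 ≤ k) (hN : 1 ≤ N) (hA : 1 ≤ A)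
    (hlam : 0 < lam) (hAlam : A * lam ≤ 1/4) (hH : H = ⌊(A * lam) ^ (-(1:ℝ) / (k:ℝ))⌋₊)
    (hNbig : 2000*A^2*((k-1).factorial:ℝ)*((A*lam)^(-(1:ℝ)/(k:ℝ))) < N) :
    (2*A*lam*N/((k-1).factorial:ℝ) + 5) * (4*((k-1).factorial:ℝ)/((H:ℝ)^(k-1)*lam) + 1)
      ≤ 2000 * (A^2 * ((k-1).factorial:ℝ) * lam ^ (-(1:ℝ)/(k:ℝ)) * (1 + N*lam)) := by
  have hA0 : (0:ℝ) < A := lt_of_lt_of_le one_pos hA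
  have hN0 : (0:ℝ) < N := lt_of_lt_of_le one_pos hN
  have hAl0 : (0:ℝ) < A*lam := mul_pos hA0 hlam
  have hk0 : (0:ℝ) < (k:ℝ) := by exact_mod_cast (by omega : 0 < k)
  set u : ℝ := (A*lam)^(-(1:ℝ)/(k:ℝ)) with hu_def
  set X : ℝ := lam^(-(1:ℝ)/(k:ℝ)) with hX_def
  set K : ℝ := ((k-1).factorial:ℝ) with hK_def
  have hK1 : (1:ℝ) ≤ K := by
    rw [hK_def]; exact_mod_cast Nat.one_le_iff_ne_zero.mpr (Nat.factorial_ne_zero _)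
  have hK0 : (0:ℝ) < K := lt_of_lt_of_le one_pos hK1
  have hu0 : (0:ℝ) < u := Real.rpow_pos_of_pos hAl0 _
  have hX0 : (0:ℝ) < X := Real.rpow_pos_of_pos hlam _
  have hexp : (-(1:ℝ)/(k:ℝ)) * (k:ℝ) = -1 := by field_simp
  have hukinv : u^k = (A*lam)⁻¹ := by
    rw [hu_def, ← Real.rpow_natCast ((A*lam)^(-(1:ℝ)/(k:ℝ))) k, ← Real.rpow_mul hAl0.le,
      hexp, Real.rpow_neg_one]
  have hupow : u^k * (A*lam) = 1 := by
    rw [hukinv]; exact inv_mul_cancel₀ (ne_of_gt hAl0)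
  have huk4 : (4:ℝ) ≤ u^k := by
    have h' := mul_le_mul_of_nonneg_left hAlam (le_of_lt (pow_pos hu0 k))
    rw [hupow] at h'
    linarith
  have hu1 : (1:ℝ) < u := by
    by_contra h
    push_neg at h
    have hle1 : u ^ k ≤ 1 := pow_le_one₀ hu0.le h
    linarith
  have hH1 : 1 ≤ H := by
    rw [hH]
    exact Nat.le_floor (by exact_mod_cast hu1.le)
  have hHr : (1:ℝ) ≤ (H:ℝ) := by exact_mod_cast hH1
  have hHu : (H:ℝ) ≤ u := by rw [hH]; exact Nat.floor_le hu0.le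
  have huH1 : u < (H:ℝ)+1 := by
    rw [hH]
    exact_mod_cast Nat.lt_floor_add_one u
  have hu2H : u ≤ 2*(H:ℝ) := by linarith
  set P : ℝ := (H:ℝ)^(k-1) with hP_def
  have hP1 : (1:ℝ) ≤ P := one_le_pow₀ hHr
  have hP0 : (0:ℝ) < P := lt_of_lt_of_le one_pos hP1
  have hexp0 : -(1:ℝ)/(k:ℝ) ≤ 0 := by
    rw [neg_div]
    exact neg_nonpos.mpr (by positivity)
  have hXu : u ≤ X := by
    rw [hu_def, hX_def]
    exact Real.rpow_le_rpow_of_nonpos hlam (le_mul_of_one_le_left hlam.le hA) hexp0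
  have hX1 : (1:ℝ) ≤ X := le_trans hu1.le hXu
  have hkm1 : k - 1 + 1 = k := by omega
  have hPow_split : u^k = u^(k-1) * u := by
    conv_lhs => rw [← hkm1]
    rw [pow_succ]
  have hukm1 : u^(k-1) ≤ 2^(k-1) * P := by
    calc u^(k-1) ≤ (2*(H:ℝ))^(k-1) := pow_le_pow_left₀ hu0.le hu2H _
      _ = 2^(k-1) * P := by rw [mul_pow]
  have h2K : (2:ℝ)^(k-1) ≤ 2*K := by
    rw [hK_def]
    exact_mod_cast two_pow_le_two_mul_factorial (k-1)
  have hukm2KP : u^(k-1) ≤ 2*K*P := by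
    have := mul_le_mul_of_nonneg_right h2K hP0.le
    linarith
  have key1 : (1:ℝ) ≤ A*X*lam*(2*K*P) := by
    have e1 : A*u*lam*u^(k-1) = u^k*(A*lam) := by rw [hPow_split]; ring
    have hc : (0:ℝ) ≤ A*lam*u^(k-1) := by positivity
    have h2 : A*u*lam*u^(k-1) ≤ A*X*lam*u^(k-1) := by
      calc A*u*lam*u^(k-1) = (A*lam*u^(k-1))*u := by ring
        _ ≤ (A*lam*u^(k-1))*X := mul_le_mul_of_nonneg_left hXu hc
        _ = A*X*lam*u^(k-1) := by ring
    have h3 : A*X*lam*u^(k-1) ≤ A*X*lam*(2*K*P) :=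
      mul_le_mul_of_nonneg_left hukm2KP (by positivity)
    calc (1:ℝ) = u^k*(A*lam) := hupow.symm
      _ = A*u*lam*u^(k-1) := e1.symm
      _ ≤ A*X*lam*u^(k-1) := h2
      _ ≤ A*X*lam*(2*K*P) := h3
  set a : ℝ := 2*A*lam*N/K with ha_def
  set b : ℝ := 4*K/(P*lam) with hb_def
  set Z : ℝ := A^2*K*X with hZ_def
  have hZ0 : (0:ℝ) < Z := by rw [hZ_def]; positivity
  have hA2 : (1:ℝ) ≤ A^2 := one_le_pow₀ hA
  have hA2K : (1:ℝ) ≤ A^2*K := by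
    calc (1:ℝ) = 1*1 := by norm_num
      _ ≤ (A^2)*K := mul_le_mul hA2 hK1 one_pos.le (by positivity)
  have hZ1 : (1:ℝ) ≤ Z := by
    rw [hZ_def]
    calc (1:ℝ) = 1*1 := by norm_num
      _ ≤ (A^2*K)*X := mul_le_mul hA2K hX1 one_pos.le (by positivity)
  have hNl0 : (0:ℝ) ≤ N*lam := by positivity
  have hab_eq : a*b = 8*A*N/P := by
    rw [ha_def, hb_def]
    field_simp
    ring
  have hq : (8:ℝ) ≤ 16*(A*X*lam*K*P) := by
    have : 16*(A*X*lam*K*P) = 8*(A*X*lam*(2*K*P)) := by ring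
    rw [this]
    linarith
  have hab : a*b ≤ 16*Z*(N*lam) := by
    rw [hab_eq, div_le_iff₀ hP0]
    calc 8*A*N = 8*(A*N) := by ring
      _ ≤ (16*(A*X*lam*K*P))*(A*N) := mul_le_mul_of_nonneg_right hq (by positivity)
      _ = 16*Z*(N*lam)*P := by rw [hZ_def]; ring
  have ha : a ≤ 2*Z*(N*lam) := by
    rw [ha_def, div_le_iff₀ hK0]
    have hAK : (1:ℝ) ≤ A*K := by
      calc (1:ℝ) = 1*1 := by norm_num
        _ ≤ A*K := mul_le_mul hA hK1 zero_le_one hA0.le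
    have hAKK : (1:ℝ) ≤ (A*K)*K := by
      calc (1:ℝ) = 1*1 := by norm_num
        _ ≤ (A*K)*K := mul_le_mul hAK hK1 zero_le_one (by positivity)
    have h1 : (1:ℝ) ≤ A*K*K*X := by
      calc (1:ℝ) = 1*1 := by norm_num
        _ ≤ ((A*K)*K)*X := mul_le_mul hAKK hX1 zero_le_one (by positivity)
        _ = A*K*K*X := by ring
    calc 2*A*lam*N = (2*A*lam*N)*1 := by ring
      _ ≤ (2*A*lam*N)*(A*K*K*X) := mul_le_mul_of_nonneg_left h1 (by positivity)
      _ = 2*Z*(N*lam)*K := by rw [hZ_def]; ring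
  have hb5 : 5*b ≤ 1100*Z*(1+N*lam) := by
    have hb_eq : (5:ℝ)*b = 20*K/(P*lam) := by rw [hb_def]; ring
    have hPl0 : (0:ℝ) < P*lam := mul_pos hP0 hlam
    by_cases hc : 4*H ≤ k
    · -- large k case
      have hNl : 2000*A^2*K*u*lam ≤ N*lam := by
        calc 2000*A^2*K*u*lam = (2000*A^2*K*u)*lam := by ring
          _ ≤ N*lam := mul_le_mul_of_nonneg_right (by linarith [hNbig]) hlam.le
      have hsq : A^2*lam^2*(u^k)^2 = 1 := by
        calc A^2*lam^2*(u^k)^2 = (u^k*(A*lam))^2 := by ring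
          _ = 1 := by rw [hupow]; norm_num
      have hW1 : u^(2*(k-1)) ≤ 16*K*P := by
        have e2 : u^(2*(k-1)) = (u^(k-1))^2 := by rw [mul_comm, pow_mul]
        have e3 : (u^(k-1))^2 ≤ (((H:ℝ)+1)^(k-1))^2 :=
          pow_le_pow_left₀ (pow_nonneg hu0.le _) (pow_le_pow_left₀ hu0.le huH1.le _) 2
        have e4 : (((H:ℝ)+1)^(k-1))^2 = (((H:ℝ)+1)^2)^(k-1) := by
          rw [← pow_mul, ← pow_mul, mul_comm]
        have e5 : (((H:ℝ)+1)^2)^(k-1) ≤ (((H:ℝ)+3)*(H:ℝ))^(k-1) := by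
          apply pow_le_pow_left₀ (by positivity)
          have hdiff : ((H:ℝ)+3)*(H:ℝ) - ((H:ℝ)+1)^2 = (H:ℝ) - 1 := by ring
          linarith
        have e6 : (((H:ℝ)+3)*(H:ℝ))^(k-1) = ((H:ℝ)+3)^(k-1) * P := by
          rw [hP_def, mul_pow]
        have e7 : ((H:ℝ)+3)^(k-1) ≤ 16*K := by
          rw [hK_def]; exact c2 k H hH1 hc
        calc u^(2*(k-1)) = (u^(k-1))^2 := e2
          _ ≤ (((H:ℝ)+1)^(k-1))^2 := e3
          _ = (((H:ℝ)+1)^2)^(k-1) := e4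
          _ ≤ (((H:ℝ)+3)*(H:ℝ))^(k-1) := e5
          _ = ((H:ℝ)+3)^(k-1) * P := e6
          _ ≤ 16*K*P := mul_le_mul_of_nonneg_right e7 hP0.le
      set Q : ℝ := A^4*K^2*u^2*P*lam^2 with hQ_def
      have hQ0 : (0:ℝ) < Q := by rw [hQ_def]; positivity
      have hid : Q*u^(2*(k-1)) = A^2*K^2*P := by
        have e8 : u^2*u^(2*(k-1)) = (u^k)^2 := by
          rw [← pow_add, ← pow_mul]
          congr 1
          omega
        calc Q*u^(2*(k-1)) = A^2*K^2*P*(A^2*lam^2*(u^2*u^(2*(k-1)))) := by rw [hQ_def]; ring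
          _ = A^2*K^2*P*(A^2*lam^2*(u^k)^2) := by rw [e8]
          _ = A^2*K^2*P := by rw [hsq]; ring
      have hlow : K/16 ≤ Q := by
        have h9 : A^2*K^2*P ≤ Q*(16*K*P) := by
          calc A^2*K^2*P = Q*u^(2*(k-1)) := hid.symm
            _ ≤ Q*(16*K*P) := mul_le_mul_of_nonneg_left hW1 hQ0.le
        have h9b : K*(K*P) ≤ A^2*K^2*P := by
          have hd : A^2*K^2*P - K*(K*P) = (A^2-1)*(K^2*P) := by ring
          have hnn := mul_nonneg (sub_nonneg.mpr hA2) (by positivity : (0:ℝ) ≤ K^2*P)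
          linarith
        have h10 : K*(K*P) ≤ (16*Q)*(K*P) := by linarith
        have h11 : K ≤ 16*Q := le_of_mul_le_mul_right h10 (mul_pos hK0 hP0)
        linarith
      rw [hb_eq, div_le_iff₀ hPl0]
      calc (20:ℝ)*K ≤ 2200000*(K/16) := by linarith
        _ ≤ 2200000*Q := by linarith
        _ = (2200000*(A^4*K^2*u*P*lam^2))*u := by rw [hQ_def]; ring
        _ ≤ (2200000*(A^4*K^2*u*P*lam^2))*X := mul_le_mul_of_nonneg_left hXu (by positivity)
        _ = 1100*Z*(2000*A^2*K*u*lam)*(P*lam) := by rw [hZ_def]; ring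
        _ ≤ 1100*Z*(N*lam)*(P*lam) :=
            mul_le_mul_of_nonneg_right (mul_le_mul_of_nonneg_left hNl (by positivity)) hPl0.le
        _ ≤ 1100*Z*(1+N*lam)*(P*lam) :=
            mul_le_mul_of_nonneg_right
              (mul_le_mul_of_nonneg_left (by linarith) (by positivity)) hPl0.le
    · -- small k: k < 4H
      push_neg at hc
      have hk4H : ((k:ℝ)-1) ≤ 4*(H:ℝ) := by
        have h' : k ≤ 4*H := by omega
        have := (Nat.cast_le (α := ℝ)).mpr h'
        push_cast at this
        linarith
      have hHpos : (0:ℝ) < (H:ℝ) := lt_of_lt_of_le one_pos hHr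
      have hHexp : (H:ℝ)+1 ≤ (H:ℝ)*Real.exp (1/(H:ℝ)) := by
        have h1 := Real.add_one_le_exp (1/(H:ℝ))
        have h2 : (H:ℝ)*(1/(H:ℝ)+1) = (H:ℝ)+1 := by field_simp; ring
        have h3 := mul_le_mul_of_nonneg_left h1 hHpos.le
        linarith
      have hexp4 : Real.exp (((k-1:ℕ):ℝ)*(1/(H:ℝ))) ≤ 55 := by
        have harg : ((k-1:ℕ):ℝ)*(1/(H:ℝ)) ≤ 4 := by
          have hc1 : ((k-1:ℕ):ℝ) ≤ 4*(H:ℝ) := by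
            have e : ((k-1:ℕ):ℝ) = (k:ℝ)-1 := by
              have h1 : 1 ≤ k := by omega
              push_cast [Nat.cast_sub h1]; ring
            rw [e]; exact hk4H
          rw [mul_one_div, div_le_iff₀ hHpos]
          linarith
        calc Real.exp (((k-1:ℕ):ℝ)*(1/(H:ℝ))) ≤ Real.exp 4 := Real.exp_le_exp.mpr harg
          _ ≤ 55 := by
            have h4 : Real.exp (4:ℝ) = Real.exp 1^4 := by
              rw [Real.exp_one_pow]; norm_num
            rw [h4]
            calc Real.exp 1^4 ≤ (2.7182818286:ℝ)^4 :=
                  pow_le_pow_left₀ (Real.exp_pos 1).le Real.exp_one_lt_d9.le 4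
              _ ≤ 55 := by norm_num
      have hup : u^(k-1) ≤ P * 55 := by
        calc u^(k-1) ≤ ((H:ℝ)+1)^(k-1) := pow_le_pow_left₀ hu0.le huH1.le _
          _ ≤ ((H:ℝ)*Real.exp (1/(H:ℝ)))^(k-1) := pow_le_pow_left₀ (by positivity) hHexp _
          _ = P * Real.exp (1/(H:ℝ))^(k-1) := by rw [hP_def, mul_pow]
          _ = P * Real.exp (((k-1:ℕ):ℝ)*(1/(H:ℝ))) := by rw [← Real.exp_nat_mul]
          _ ≤ P * 55 := mul_le_mul_of_nonneg_left hexp4 hP0.le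
      have hAuP : 1/55 ≤ A*u*lam*P := by
        have e1 : A*u*lam*u^(k-1) = u^k*(A*lam) := by rw [hPow_split]; ring
        have h2 : A*u*lam*u^(k-1) = 1 := by rw [e1, hupow]
        have h3 : (0:ℝ) ≤ A*u*lam := by positivity
        have h4 : A*u*lam*u^(k-1) ≤ A*u*lam*(P*55) := mul_le_mul_of_nonneg_left hup h3
        have h5 : A*u*lam*(P*55) = 55*(A*u*lam*P) := by ring
        rw [h5] at h4
        rw [h2] at h4
        linarith
      have hXstep : A*u*lam*P ≤ A*X*lam*P := by
        have hc' : (0:ℝ) ≤ A*lam*P := by positivity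
        calc A*u*lam*P = (A*lam*P)*u := by ring
          _ ≤ (A*lam*P)*X := mul_le_mul_of_nonneg_left hXu hc'
          _ = A*X*lam*P := by ring
      rw [hb_eq, div_le_iff₀ hPl0]
      have hKAK : K ≤ A*K := le_mul_of_one_le_left hK0.le hA
      calc (20:ℝ)*K ≤ 20*(A*K) := by linarith
        _ = 1100*(A*K)*(1/55) := by ring
        _ ≤ 1100*(A*K)*(A*u*lam*P) := mul_le_mul_of_nonneg_left hAuP (by positivity)
        _ ≤ 1100*(A*K)*(A*X*lam*P) := mul_le_mul_of_nonneg_left hXstep (by positivity)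
        _ = 1100*Z*(P*lam) := by rw [hZ_def]; ring
        _ = (1100*Z*1)*(P*lam) := by ring
        _ ≤ (1100*Z*(1+N*lam))*(P*lam) :=
            mul_le_mul_of_nonneg_right
              (mul_le_mul_of_nonneg_left (by linarith : (1:ℝ) ≤ 1+N*lam) (by positivity)) hPl0.le
        _ = 1100*Z*(1+N*lam)*(P*lam) := by ring
  have h5Z : (5:ℝ) ≤ 5*Z := by linarith
  have hZN : (0:ℝ) ≤ Z*(N*lam) := by positivity
  have expand : (a + 5)*(b + 1) = a*b + a + 5*b + 5 := by ring
  have hfinal : (a+5)*(b+1) ≤ 2000*(Z*(1+N*lam)) := by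
    rw [expand]
    linarith [hab, ha, hb5, h5Z, hZ0.le, hZN]
  calc (a+5)*(b+1) ≤ 2000*(Z*(1+N*lam)) := hfinal
    _ = 2000*(A^2*K*X*(1+N*lam)) := by rw [hZ_def]

set_option maxHeartbeats 1000000 in
/-- Let `k ≥ 2`, `N ≥ 1`, and let `f` have continuous derivatives up to order `k`
on `[0,N]`, with `0 < λk ≤ f⁽ᵏ⁾ ≤ A λk` on `(0,N)` where `A ≥ 1` and `A λk ≤ 1/4`.  Put
`H = ⌊(Aλk)^{-1/k}⌋` and let `𝒩` count pairs of positive integers `m, n ≤ N` with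
`‖f⁽ʲ⁾(m)/j! − f⁽ʲ⁾(n)/j!‖ ≤ 2H^{-j}` for `1 ≤ j ≤ k-1`.  Then
`𝒩 ≤ C A² (k-1)! N λk^{-1/k} (1 + N λk)` with an absolute constant `C`. -/
theorem counting_simple : ∃ C : ℝ, 0 < C ∧
    ∀ (k : ℕ) (N A lam : ℝ) (f : ℝ → ℝ) (H 𝒩 : ℕ),
      2 ≤ k → 1 ≤ N → 1 ≤ A → 0 < lam → A * lam ≤ 1 / 4 →
      ContDiffOn ℝ k f (Set.Icc 0 N) →
      (∀ x ∈ Set.Ioo (0 : ℝ) N,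
        lam ≤ iteratedDerivWithin k f (Set.Icc 0 N) x ∧
        iteratedDerivWithin k f (Set.Icc 0 N) x ≤ A * lam) →
      H = ⌊(A * lam) ^ (-(1 : ℝ) / (k : ℝ))⌋₊ →
      𝒩 = Nat.card {p : ℕ × ℕ | 1 ≤ p.1 ∧ (p.1 : ℝ) ≤ N ∧ 1 ≤ p.2 ∧ (p.2 : ℝ) ≤ N ∧
            ∀ j : ℕ, 1 ≤ j → j ≤ k - 1 →
              distNearestInt (iteratedDerivWithin j f (Set.Icc 0 N) p.1 / (j.factorial : ℝ)
                  - iteratedDerivWithin j f (Set.Icc 0 N) p.2 / (j.factorial : ℝ)) ≤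
                2 * (H : ℝ) ^ (-(j : ℝ))} →
      (𝒩 : ℝ) ≤ C * A ^ 2 * ((k - 1).factorial : ℝ) * N * lam ^ (-(1 : ℝ) / (k : ℝ)) *
        (1 + N * lam) := by
  classical
  refine ⟨2000, by norm_num, ?_⟩
  intro k N A lam f H 𝒩 hk hN hA hlam hAlam hf hd hH h𝒩
  have hA0 : (0:ℝ) < A := lt_of_lt_of_le one_pos hA
  have hN0 : (0:ℝ) < N := lt_of_lt_of_le one_pos hN
  have hAl0 : (0:ℝ) < A*lam := mul_pos hA0 hlam
  have hk0 : (0:ℝ) < (k:ℝ) := by exact_mod_cast (by omega : 0 < k)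
  set u : ℝ := (A*lam)^(-(1:ℝ)/(k:ℝ)) with hu_def
  set X : ℝ := lam^(-(1:ℝ)/(k:ℝ)) with hX_def
  set K : ℝ := ((k-1).factorial:ℝ) with hK_def
  have hK1 : (1:ℝ) ≤ K := by
    rw [hK_def]; exact_mod_cast Nat.one_le_iff_ne_zero.mpr (Nat.factorial_ne_zero _)
  have hK0 : (0:ℝ) < K := lt_of_lt_of_le one_pos hK1
  have hu0 : (0:ℝ) < u := Real.rpow_pos_of_pos hAl0 _
  have hX0 : (0:ℝ) < X := Real.rpow_pos_of_pos hlam _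
  have hexpk : (-(1:ℝ)/(k:ℝ)) * (k:ℝ) = -1 := by field_simp
  have hukinv : u^k = (A*lam)⁻¹ := by
    rw [hu_def, ← Real.rpow_natCast ((A*lam)^(-(1:ℝ)/(k:ℝ))) k, ← Real.rpow_mul hAl0.le,
      hexpk, Real.rpow_neg_one]
  have hupow : u^k * (A*lam) = 1 := by
    rw [hukinv]; exact inv_mul_cancel₀ (ne_of_gt hAl0)
  have huk4 : (4:ℝ) ≤ u^k := by
    have h' := mul_le_mul_of_nonneg_left hAlam (le_of_lt (pow_pos hu0 k))
    rw [hupow] at h'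
    linarith
  have hu1 : (1:ℝ) < u := by
    by_contra h
    push_neg at h
    have hle1 : u ^ k ≤ 1 := pow_le_one₀ hu0.le h
    linarith
  have hH1 : 1 ≤ H := by
    rw [hH]
    exact Nat.le_floor (by exact_mod_cast hu1.le)
  have hHr : (1:ℝ) ≤ (H:ℝ) := by exact_mod_cast hH1
  have hexp0 : -(1:ℝ)/(k:ℝ) ≤ 0 := by
    rw [neg_div]
    exact neg_nonpos.mpr (by positivity)
  have hXu : u ≤ X := by
    rw [hu_def, hX_def]
    exact Real.rpow_le_rpow_of_nonpos hlam (le_mul_of_one_le_left hlam.le hA) hexp0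
  have hX1 : (1:ℝ) ≤ X := le_trans hu1.le hXu
  set P : ℝ := (H:ℝ)^(k-1) with hP_def
  have hP1 : (1:ℝ) ≤ P := one_le_pow₀ hHr
  have hP0 : (0:ℝ) < P := lt_of_lt_of_le one_pos hP1
  set M : ℕ := ⌊N⌋₊ with hM_def
  have hM1 : 1 ≤ M := Nat.le_floor (by exact_mod_cast hN)
  have hMN : (M:ℝ) ≤ N := Nat.floor_le hN0.le
  set R : ℕ := ⌈A*lam*N/K⌉₊ + 1 with hR_def
  set L : ℕ := ⌊4*K/(P*lam)⌋₊ with hL_def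
  set G : ℕ → ℝ := fun n => iteratedDerivWithin (k-1) f (Set.Icc 0 N) (n:ℝ) / K with hG_def
  have hkm1 : k - 1 + 1 = k := by omega
  -- derivative facts
  have hUD : UniqueDiffOn ℝ (Set.Icc (0:ℝ) N) := uniqueDiffOn_Icc hN0
  have hdiff : DifferentiableOn ℝ (iteratedDerivWithin (k-1) f (Set.Icc 0 N)) (Set.Icc 0 N) := by
    apply hf.differentiableOn_iteratedDerivWithin _ hUD
    exact_mod_cast (by omega : k - 1 < k)
  have hcont : ContinuousOn (iteratedDerivWithin (k-1) f (Set.Icc 0 N)) (Set.Icc 0 N) := by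
    apply hf.continuousOn_iteratedDerivWithin _ hUD
    exact_mod_cast (by omega : k - 1 ≤ k)
  have hderiv : ∀ x ∈ Set.Ioo (0:ℝ) N, HasDerivAt (iteratedDerivWithin (k-1) f (Set.Icc 0 N))
      (iteratedDerivWithin k f (Set.Icc 0 N) x) x := by
    intro x hx
    have hmem : Set.Icc (0:ℝ) N ∈ nhds x := Icc_mem_nhds hx.1 hx.2
    have hxIcc : x ∈ Set.Icc (0:ℝ) N := ⟨hx.1.le, hx.2.le⟩
    have h1 : HasDerivWithinAt (iteratedDerivWithin (k-1) f (Set.Icc 0 N))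
        (derivWithin (iteratedDerivWithin (k-1) f (Set.Icc 0 N)) (Set.Icc 0 N) x)
        (Set.Icc 0 N) x := (hdiff x hxIcc).hasDerivWithinAt
    have h2 := h1.hasDerivAt hmem
    have h3 : derivWithin (iteratedDerivWithin (k-1) f (Set.Icc 0 N)) (Set.Icc 0 N) x
        = iteratedDerivWithin k f (Set.Icc 0 N) x := by
      have h4 := (congrFun (iteratedDerivWithin_succ (n := k-1) (f := f) (s := Set.Icc 0 N)) x).symm
      rw [hkm1] at h4
      exact h4
    rw [← h3]
    exact h2
  have A1 : ∀ x y : ℝ, 0 < x → x < y → y ≤ N →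
      lam*(y-x) ≤ iteratedDerivWithin (k-1) f (Set.Icc 0 N) y
        - iteratedDerivWithin (k-1) f (Set.Icc 0 N) x ∧
      iteratedDerivWithin (k-1) f (Set.Icc 0 N) y
        - iteratedDerivWithin (k-1) f (Set.Icc 0 N) x ≤ A*lam*(y-x) := by
    intro x y hx hxy hyN
    have hsub : Set.Icc x y ⊆ Set.Icc (0:ℝ) N := Set.Icc_subset_Icc hx.le hyN
    have hsub2 : Set.Ioo x y ⊆ Set.Ioo (0:ℝ) N := fun z hz =>
      ⟨lt_trans hx hz.1, lt_of_lt_of_le hz.2 hyN⟩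
    obtain ⟨c, hc, hceq⟩ := exists_hasDerivAt_eq_slope
      (iteratedDerivWithin (k-1) f (Set.Icc 0 N))
      (fun z => iteratedDerivWithin k f (Set.Icc 0 N) z) hxy (hcont.mono hsub)
      (fun z hz => hderiv z (hsub2 hz))
    have hcd := hd c (hsub2 hc)
    have hyx : (0:ℝ) < y - x := sub_pos.mpr hxy
    have hlow := hcd.1
    have hhigh := hcd.2
    rw [hceq] at hlow hhigh
    constructor
    · calc lam*(y-x) ≤ ((iteratedDerivWithin (k-1) f (Set.Icc 0 N) y
            - iteratedDerivWithin (k-1) f (Set.Icc 0 N) x)/(y-x))*(y-x) :=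
          mul_le_mul_of_nonneg_right hlow hyx.le
        _ = _ := div_mul_cancel₀ _ (ne_of_gt hyx)
    · calc iteratedDerivWithin (k-1) f (Set.Icc 0 N) y
            - iteratedDerivWithin (k-1) f (Set.Icc 0 N) x
          = ((iteratedDerivWithin (k-1) f (Set.Icc 0 N) y
            - iteratedDerivWithin (k-1) f (Set.Icc 0 N) x)/(y-x))*(y-x) :=
            (div_mul_cancel₀ _ (ne_of_gt hyx)).symm
        _ ≤ (A*lam)*(y-x) := mul_le_mul_of_nonneg_right hhigh hyx.le
        _ = A*lam*(y-x) := by ring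
  have hGspace : ∀ a b : ℕ, 1 ≤ a → a < b → (b:ℝ) ≤ N →
      lam*((b:ℝ)-(a:ℝ))/K ≤ G b - G a ∧ G b - G a ≤ A*lam*((b:ℝ)-(a:ℝ))/K := by
    intro a b ha hab hbN
    have hab' : (a:ℝ) < (b:ℝ) := by exact_mod_cast hab
    have ha0 : (0:ℝ) < (a:ℝ) := lt_of_lt_of_le one_pos (by exact_mod_cast ha)
    obtain ⟨hl, hr⟩ := A1 (a:ℝ) (b:ℝ) ha0 hab' hbN
    have hGdiff : G b - G a = (iteratedDerivWithin (k-1) f (Set.Icc 0 N) (b:ℝ)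
        - iteratedDerivWithin (k-1) f (Set.Icc 0 N) (a:ℝ))/K := by
      rw [hG_def]
      ring
    constructor
    · rw [hGdiff, div_le_div_iff_of_pos_right hK0]
      exact hl
    · rw [hGdiff, div_le_div_iff_of_pos_right hK0]
      exact hr
  have hGbound : ∀ a b : ℕ, 1 ≤ a → a ≤ M → 1 ≤ b → b ≤ M →
      |G b - G a| ≤ A*lam*N/K := by
    have haux : ∀ a b : ℕ, 1 ≤ a → a < b → b ≤ M → |G b - G a| ≤ A*lam*N/K := by
      intro a b ha hab hbM
      have hbN : (b:ℝ) ≤ N := le_trans (by exact_mod_cast hbM) hMN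
      obtain ⟨hl, hr⟩ := hGspace a b ha hab hbN
      have h1 : (0:ℝ) ≤ G b - G a := by
        have hba0 : (0:ℝ) < (b:ℝ)-(a:ℝ) := sub_pos.mpr (by exact_mod_cast hab)
        have h2 : (0:ℝ) < lam*((b:ℝ)-(a:ℝ))/K := div_pos (mul_pos hlam hba0) hK0
        linarith
      rw [abs_of_nonneg h1]
      have hba : (b:ℝ)-(a:ℝ) ≤ N := by
        have ha0 : (0:ℝ) ≤ (a:ℝ) := by positivity
        linarith
      calc G b - G a ≤ A*lam*((b:ℝ)-(a:ℝ))/K := hr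
        _ ≤ A*lam*N/K := by gcongr
    intro a b ha haM hb hbM
    rcases lt_trichotomy a b with h | h | h
    · exact haux a b ha h hbM
    · subst h
      rw [sub_self, abs_zero]
      positivity
    · rw [abs_sub_comm]
      exact haux b a hb h haM
  -- the finset of candidate pairs
  set T : Finset (ℕ × ℕ) := ((Finset.Icc 1 M) ×ˢ (Finset.Icc 1 M)).filter
      (fun p => distNearestInt (G p.1 - G p.2) ≤ 2*(H:ℝ)^(-(((k-1:ℕ)):ℝ))) with hT_def
  have hsub : {p : ℕ × ℕ | 1 ≤ p.1 ∧ (p.1 : ℝ) ≤ N ∧ 1 ≤ p.2 ∧ (p.2 : ℝ) ≤ N ∧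
      ∀ j : ℕ, 1 ≤ j → j ≤ k - 1 →
        distNearestInt (iteratedDerivWithin j f (Set.Icc 0 N) p.1 / (j.factorial : ℝ)
            - iteratedDerivWithin j f (Set.Icc 0 N) p.2 / (j.factorial : ℝ)) ≤
          2 * (H : ℝ) ^ (-(j : ℝ))} ⊆ (↑T : Set (ℕ × ℕ)) := by
    intro p hp
    obtain ⟨h1, h2, h3, h4, h5⟩ := hp
    have hcond := h5 (k-1) (by omega) le_rfl
    rw [Finset.mem_coe, hT_def, Finset.mem_filter, Finset.mem_product,
      Finset.mem_Icc, Finset.mem_Icc]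
    exact ⟨⟨⟨h1, Nat.le_floor h2⟩, ⟨h3, Nat.le_floor h4⟩⟩, hcond⟩
  have hNT : 𝒩 ≤ T.card := by
    rw [h𝒩]
    exact le_trans (Nat.card_mono T.finite_toSet hsub)
      (le_of_eq (by rw [Nat.card_coe_set_eq, Set.ncard_coe_finset]))
  have hTM : T.card ≤ M*M := by
    calc T.card ≤ ((Finset.Icc 1 M) ×ˢ (Finset.Icc 1 M)).card := Finset.card_filter_le _ _
      _ = M*M := by rw [Finset.card_product, Nat.card_Icc]; simp
  -- delta
  have hdelta : (2:ℝ)*(H:ℝ)^(-(((k-1:ℕ)):ℝ)) = 2/P := by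
    rw [Real.rpow_neg (by positivity : (0:ℝ) ≤ (H:ℝ)), Real.rpow_natCast, hP_def,
      div_eq_mul_inv]
  have hTcount : T.card ≤ M * ((2*R+1) * (L+1)) := by
    have hmaps : ∀ p ∈ T, (fun p : ℕ × ℕ => (p.1, (round (G p.2 - G p.1), p.2 % (L+1)))) p ∈
        (Finset.Icc 1 M) ×ˢ ((Finset.Icc (-(R:ℤ)) (R:ℤ)) ×ˢ (Finset.range (L+1))) := by
      intro p hp
      rw [hT_def, Finset.mem_filter, Finset.mem_product] at hp
      obtain ⟨⟨hp1, hp2⟩, hpc⟩ := hp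
      rw [Finset.mem_Icc] at hp1 hp2
      simp only [Finset.mem_product, Finset.mem_Icc, Finset.mem_range]
      refine ⟨⟨hp1.1, hp1.2⟩, ⟨?_, Nat.mod_lt _ (by omega)⟩⟩
      have hb := hGbound p.1 p.2 hp1.1 hp1.2 hp2.1 hp2.2
      set x : ℝ := G p.2 - G p.1 with hx_def
      have h1 : |x - (round x : ℝ)| ≤ 1/2 := abs_sub_round x
      have h2 : |(round x : ℝ)| ≤ |x| + 1/2 := by
        have e : (round x : ℝ) = x - (x - (round x:ℝ)) := by ring
        calc |(round x : ℝ)| = |x - (x - (round x:ℝ))| := by rw [← e]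
          _ ≤ |x| + |x - (round x:ℝ)| := by
              rw [sub_eq_add_neg]
              exact (abs_add_le _ _).trans (by rw [abs_neg])
          _ ≤ |x| + 1/2 := by linarith
      have h3 : |(round x : ℝ)| ≤ (R:ℝ) := by
        have hR : A*lam*N/K + 1 ≤ (R:ℝ) := by
          rw [hR_def]
          push_cast
          linarith [Nat.le_ceil (A*lam*N/K)]
        calc |(round x : ℝ)| ≤ |x| + 1/2 := h2
          _ ≤ A*lam*N/K + 1/2 := by linarith [hb]
          _ ≤ (R:ℝ) := by linarith
      have h4 : |round x| ≤ (R:ℤ) := by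
        have : ((|round x| : ℤ) : ℝ) ≤ ((R:ℤ):ℝ) := by
          rw [Int.cast_abs]
          exact_mod_cast h3
        exact_mod_cast this
      exact ⟨neg_le_of_abs_le h4, le_of_abs_le h4⟩
    have hinj : Set.InjOn (fun p : ℕ × ℕ => (p.1, (round (G p.2 - G p.1), p.2 % (L+1))))
        (↑T : Set (ℕ × ℕ)) := by
      intro p hp q hq heq
      simp only [Prod.mk.injEq] at heq
      obtain ⟨he1, he2, he3⟩ := heq
      rw [Finset.mem_coe, hT_def, Finset.mem_filter, Finset.mem_product] at hp hq
      obtain ⟨⟨hp1, hp2⟩, hpc⟩ := hp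
      obtain ⟨⟨hq1, hq2⟩, hqc⟩ := hq
      rw [Finset.mem_Icc] at hp1 hp2 hq1 hq2
      -- distance facts
      have hdist : ∀ r s : ℕ, distNearestInt (G r - G s) ≤ 2/P →
          |(G s - G r) - (round (G s - G r) : ℝ)| ≤ 2/P := by
        intro r s hrs
        calc |(G s - G r) - (round (G s - G r) : ℝ)|
            ≤ |(G s - G r) - ((-(round (G r - G s)) : ℤ) : ℝ)| := round_min _ _
          _ = |(G r - G s) - (round (G r - G s) : ℝ)| := by
              have e : (G s - G r) - ((-(round (G r - G s)) : ℤ) : ℝ)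
                  = -((G r - G s) - (round (G r - G s) : ℝ)) := by push_cast; ring
              rw [e, abs_neg]
          _ ≤ 2/P := hrs
      have hpc' : distNearestInt (G p.1 - G p.2) ≤ 2/P := by rw [← hdelta]; exact hpc
      have hqc' : distNearestInt (G q.1 - G q.2) ≤ 2/P := by rw [← hdelta]; exact hqc
      have hdp := hdist p.1 p.2 hpc'
      have hdq := hdist q.1 q.2 hqc'
      rw [← he1] at hdq he2
      have hclose : |G p.2 - G q.2| ≤ 4/P := by
        rw [← he2] at hdq
        have e : G p.2 - G q.2 = (G p.2 - G p.1 - (round (G p.2 - G p.1):ℝ))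
            - (G q.2 - G p.1 - (round (G p.2 - G p.1):ℝ)) := by ring
        rw [e]
        calc |(G p.2 - G p.1 - (round (G p.2 - G p.1):ℝ))
              - (G q.2 - G p.1 - (round (G p.2 - G p.1):ℝ))|
            ≤ |G p.2 - G p.1 - (round (G p.2 - G p.1):ℝ)|
              + |G q.2 - G p.1 - (round (G p.2 - G p.1):ℝ)| := by
              rw [sub_eq_add_neg]
              exact (abs_add_le _ _).trans (by rw [abs_neg])
          _ ≤ 2/P + 2/P := add_le_add hdp hdq
          _ = 4/P := by ring
      -- conclude equality of second coordinates
      have hmain : ∀ r s : ℕ, 1 ≤ r → r < s → s ≤ M → |G r - G s| ≤ 4/P →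
          r % (L+1) = s % (L+1) → False := by
        intro r s hr hrs hsM habs hmod
        have hsN : (s:ℝ) ≤ N := le_trans (by exact_mod_cast hsM) hMN
        obtain ⟨hl, _⟩ := hGspace r s hr hrs hsN
        have h1 : G s - G r ≤ 4/P := by
          have := abs_sub_comm (G r) (G s) ▸ habs
          exact le_trans (le_abs_self _) this
        have h2 : lam*((s:ℝ)-(r:ℝ))/K ≤ 4/P := le_trans hl h1
        have h3 : ((s:ℝ)-(r:ℝ)) ≤ 4*K/(P*lam) := by
          rw [div_le_div_iff₀ (by positivity) hP0] at h2
          rw [le_div_iff₀ (by positivity : (0:ℝ) < P*lam)]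
          nlinarith [h2]
        have h4 : s - r ≤ L := by
          rw [hL_def]
          apply Nat.le_floor
          rw [Nat.cast_sub hrs.le]
          exact_mod_cast h3
        have h5 : (L+1) ∣ (s - r) := (Nat.modEq_iff_dvd' hrs.le).mp hmod
        have h6 : s - r ≠ 0 := by omega
        have h7 := Nat.le_of_dvd (by omega) h5
        omega
      rcases lt_trichotomy p.2 q.2 with hlt | heqq | hgt
      · exact absurd he3 (by
          intro hmod
          exact hmain p.2 q.2 hp2.1 hlt hq2.2 hclose hmod)
      · exact Prod.ext he1 heqq
      · exact absurd he3.symm (by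
          intro hmod
          exact hmain q.2 p.2 hq2.1 hgt hp2.2 (by rw [abs_sub_comm]; exact hclose) hmod)
    calc T.card ≤ ((Finset.Icc 1 M) ×ˢ ((Finset.Icc (-(R:ℤ)) (R:ℤ)) ×ˢ (Finset.range (L+1)))).card :=
        Finset.card_le_card_of_injOn _ hmaps hinj
      _ = M * ((2*R+1) * (L+1)) := by
        rw [Finset.card_product, Finset.card_product, Nat.card_Icc, Int.card_Icc,
          Finset.card_range]
        have e1 : M + 1 - 1 = M := by omega
        have e2 : (((R:ℤ)) + 1 - (-(R:ℤ))).toNat = 2*R+1 := by omega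
        rw [e1, e2]
  -- final numeric assembly
  rcases le_or_gt N (2000*A^2*K*u) with hsmall | hbig
  · have h1 : (𝒩:ℝ) ≤ (M:ℝ)*(M:ℝ) := by exact_mod_cast le_trans hNT hTM
    have hNlam0 : (0:ℝ) ≤ N*lam := by positivity
    calc (𝒩:ℝ) ≤ (M:ℝ)*(M:ℝ) := h1
      _ ≤ N*N := mul_le_mul hMN hMN (by positivity) hN0.le
      _ ≤ N*(2000*A^2*K*u) := mul_le_mul_of_nonneg_left hsmall hN0.le
      _ ≤ N*(2000*A^2*K*X) := by
          apply mul_le_mul_of_nonneg_left _ hN0.le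
          have h2 : (0:ℝ) ≤ 2000*A^2*K := by positivity
          calc 2000*A^2*K*u = (2000*A^2*K)*u := by ring
            _ ≤ (2000*A^2*K)*X := mul_le_mul_of_nonneg_left hXu h2
            _ = 2000*A^2*K*X := by ring
      _ = (2000*A^2*K*N*X)*1 := by ring
      _ ≤ (2000*A^2*K*N*X)*(1+N*lam) := by
          apply mul_le_mul_of_nonneg_left (by linarith) (by positivity)
      _ = 2000*A^2*K*N*X*(1+N*lam) := by ring
  · have h1 : (𝒩:ℝ) ≤ (M:ℝ)*(((2*R+1:ℕ)):ℝ)*(((L+1:ℕ)):ℝ) := by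
      have := le_trans hNT hTcount
      have hcast : ((M * ((2*R+1) * (L+1)) : ℕ) : ℝ)
          = (M:ℝ)*(((2*R+1:ℕ)):ℝ)*(((L+1:ℕ)):ℝ) := by push_cast; ring
      calc (𝒩:ℝ) ≤ ((M * ((2*R+1) * (L+1)) : ℕ) : ℝ) := by exact_mod_cast this
        _ = _ := hcast
    have hR1 : (((2*R+1:ℕ)):ℝ) ≤ 2*A*lam*N/K + 5 := by
      have hceil := Nat.ceil_lt_add_one (show (0:ℝ) ≤ A*lam*N/K by positivity)
      have e : 2*A*lam*N/K = 2*(A*lam*N/K) := by ring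
      rw [hR_def, e]
      push_cast
      linarith
    have hL1 : (((L+1:ℕ)):ℝ) ≤ 4*K/(P*lam) + 1 := by
      have hfl := Nat.floor_le (show (0:ℝ) ≤ 4*K/(P*lam) by positivity)
      rw [hL_def]
      push_cast
      linarith
    have hEG := endgame k H N A lam hk hN hA hlam hAlam hH hbig
    have hstep1 : (M:ℝ)*(((2*R+1:ℕ)):ℝ) ≤ N*(2*A*lam*N/K + 5) :=
      mul_le_mul hMN hR1 (by positivity) hN0.le
    calc (𝒩:ℝ) ≤ (M:ℝ)*(((2*R+1:ℕ)):ℝ)*(((L+1:ℕ)):ℝ) := h1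
      _ ≤ (N*(2*A*lam*N/K + 5))*(4*K/(P*lam) + 1) := by
          apply mul_le_mul hstep1 hL1 (by positivity) ?_
          positivity
      _ = N*((2*A*lam*N/K + 5)*(4*K/(P*lam) + 1)) := by ring
      _ ≤ N*(2000*(A^2*K*X*(1+N*lam))) := mul_le_mul_of_nonneg_left hEG hN0.le
      _ = 2000*A^2*K*N*X*(1+N*lam) := by ring
end

section
/- Let k ≥ 3 be an integer, N ≥ 1, and suppose f : [0,N] → ℝ has continuous derivatives up to order k on (0,N), with 0 < λ_k ≤ f^{(k)}(x) ≤ A·λ_k for all x ∈ (0,N), where A ≥ 1 and A·λ_k ≤ 1/4. Put H = ⌊(Aλ_k)^{−1/k}⌋ and K = 1 + ⌊4Aλ_kN⌋. If m and n are positive integers with m, n ≤ N, |m − n| ≤ 1 + N/K, and ‖f^{(k−1)}(m)/(k−1)! − f^{(k−1)}(n)/(k−1)!‖ ≤ 4H^{1−k}, then |m − n| ≤ 4(k−1)!/(λ_k H^{k−1}). -/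
open Finset

lemma distNearestInt_neg (x : ℝ) : distNearestInt (-x) = distNearestInt x := by
  unfold distNearestInt
  apply le_antisymm
  · calc |(-x) - round (-x)| ≤ |(-x) - ((-(round x) : ℤ) : ℝ)| := round_le _ _
      _ = |x - (round x : ℝ)| := by push_cast; rw [← abs_neg]; congr 1; ring
  · calc |x - round x| ≤ |x - ((-(round (-x)) : ℤ) : ℝ)| := round_le _ _
      _ = |(-x) - (round (-x) : ℝ)| := by push_cast; rw [← abs_neg]; congr 1; ring

lemma distNearestInt_sub_comm (x y : ℝ) : distNearestInt (x - y) = distNearestInt (y - x) := by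
  rw [show y - x = -(x - y) by ring, distNearestInt_neg]

lemma close_pairs_aux (k : ℕ) (N A lam : ℝ) (f : ℝ → ℝ) (H K : ℕ)
    (hk : 3 ≤ k) (hN : 1 ≤ N) (hA : 1 ≤ A) (hlam : 0 < lam) (hAl : A * lam ≤ 1 / 4)
    (hf : ContDiffOn ℝ k f (Set.Icc 0 N))
    (hfk : ∀ x ∈ Set.Ioo (0 : ℝ) N,
      lam ≤ iteratedDerivWithin k f (Set.Icc 0 N) x ∧
      iteratedDerivWithin k f (Set.Icc 0 N) x ≤ A * lam)
    (hH : H = ⌊(A * lam) ^ (-(1 : ℝ) / (k : ℝ))⌋₊)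
    (hK : K = 1 + ⌊4 * A * lam * N⌋₊)
    (m n : ℕ) (hmN : (m : ℝ) ≤ N) (hlt : n < m)
    (hclose : |(m : ℝ) - (n : ℝ)| ≤ 1 + N / (K : ℝ))
    (hnear : distNearestInt
        (iteratedDerivWithin (k - 1) f (Set.Icc 0 N) m / ((k - 1).factorial : ℝ)
          - iteratedDerivWithin (k - 1) f (Set.Icc 0 N) n / ((k - 1).factorial : ℝ)) ≤
        4 * (H : ℝ) ^ ((1 : ℝ) - (k : ℝ))) :
    |(m : ℝ) - (n : ℝ)| ≤ 4 * ((k - 1).factorial : ℝ) / (lam * (H : ℝ) ^ ((k : ℝ) - 1)) := by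
  have hN0 : (0 : ℝ) < N := by linarith
  set s : Set ℝ := Set.Icc 0 N with hs
  have hsU : UniqueDiffOn ℝ s := uniqueDiffOn_Icc hN0
  have hkk : k - 1 + 1 = k := by omega
  set g : ℝ → ℝ := iteratedDerivWithin (k - 1) f s with hg
  have hderiv : ∀ x ∈ Set.Ioo (0 : ℝ) N,
      HasDerivAt g (iteratedDerivWithin k f s x) x := by
    intro x hx
    have hxs : x ∈ s := Set.mem_Icc.2 ⟨hx.1.le, hx.2.le⟩
    have hmem : s ∈ nhds x := Icc_mem_nhds hx.1 hx.2
    have hdiff : DifferentiableWithinAt ℝ g s x :=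
      hf.differentiableOn_iteratedDerivWithin (Nat.cast_lt.mpr (Nat.sub_lt (by omega) Nat.one_pos))
        hsU x hxs
    have hD : iteratedDerivWithin k f s x = derivWithin g s x := by
      conv_lhs => rw [← hkk]
      exact congrFun iteratedDerivWithin_succ x
    rw [hD]
    exact hdiff.hasDerivWithinAt.hasDerivAt hmem
  have hmn : (n : ℝ) < m := by exact_mod_cast hlt
  have hsub : Set.Icc (n : ℝ) m ⊆ s := Set.Icc_subset_Icc (by positivity) hmN
  have hsub2 : Set.Ioo (n : ℝ) m ⊆ Set.Ioo 0 N :=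
    Set.Ioo_subset_Ioo (by positivity) hmN
  have hcont : ContinuousOn g (Set.Icc (n : ℝ) m) :=
    (hf.continuousOn_iteratedDerivWithin (by exact_mod_cast Nat.sub_le k 1) hsU).mono hsub
  obtain ⟨c, hc, hceq⟩ := exists_hasDerivAt_eq_slope g (fun x => iteratedDerivWithin k f s x)
    hmn hcont (fun x hx => hderiv x (hsub2 hx))
  obtain ⟨hlo, hhi⟩ := hfk c (hsub2 hc)
  have hne : (m : ℝ) - n ≠ 0 := (sub_pos.2 hmn).ne'
  have hgdiff : g m - g n = iteratedDerivWithin k f s c * ((m : ℝ) - n) := by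
    rw [hceq, div_mul_cancel₀ _ hne]
  set fc : ℝ := ((k - 1).factorial : ℝ) with hfc
  have hfc2 : (2 : ℝ) ≤ fc := by
    have h2 : Nat.factorial 2 ≤ (k - 1).factorial := Nat.factorial_le (by omega)
    rw [hfc]
    exact_mod_cast h2
  have hfc0 : (0 : ℝ) < fc := by linarith
  set D : ℝ := g m / fc - g n / fc with hD
  have hDeq : D = iteratedDerivWithin k f s c * ((m : ℝ) - n) / fc := by
    rw [hD, div_sub_div_same, hgdiff]
  have hmn0 : (0 : ℝ) < (m : ℝ) - n := by linarith
  -- H ≥ 1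
  have hAl0 : (0 : ℝ) < A * lam := by positivity
  have h1 : (1 : ℝ) ≤ (A * lam) ^ (-(1 : ℝ) / (k : ℝ)) := by
    rw [show -(1 : ℝ) / (k : ℝ) = -(1 / (k : ℝ)) by ring, Real.rpow_neg hAl0.le]
    have h2 : (A * lam) ^ ((1 : ℝ) / k) ≤ 1 :=
      Real.rpow_le_one hAl0.le (by linarith) (by positivity)
    have h3 : 0 < (A * lam) ^ ((1 : ℝ) / k) := Real.rpow_pos_of_pos hAl0 _
    exact (one_le_inv₀ h3).2 h2
  have hH1 : 1 ≤ H := by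
    rw [hH]; exact Nat.le_floor (by exact_mod_cast h1)
  have hHr : (1 : ℝ) ≤ (H : ℝ) := by exact_mod_cast hH1
  have hkr : (3 : ℝ) ≤ (k : ℝ) := by exact_mod_cast hk
  set P : ℝ := (H : ℝ) ^ ((k : ℝ) - 1) with hP
  have hP1 : (1 : ℝ) ≤ P := Real.one_le_rpow hHr (by linarith)
  have hP0 : (0 : ℝ) < P := by linarith
  have hεP : (H : ℝ) ^ ((1 : ℝ) - (k : ℝ)) = P⁻¹ := by
    rw [show (1 : ℝ) - (k : ℝ) = -((k : ℝ) - 1) by ring, Real.rpow_neg (by linarith)]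
  -- K bound
  have hK0 : (0 : ℝ) < (K : ℝ) := by
    have : 1 ≤ K := by omega
    exact_mod_cast this
  have hKgt : 4 * A * lam * N < (K : ℝ) := by
    rw [hK]; push_cast
    have := Nat.lt_floor_add_one (4 * A * lam * N)
    linarith
  have hNK : A * lam * (N / K) < 1 / 4 := by
    rw [mul_div_assoc', div_lt_iff₀ hK0]
    linarith
  have hmn' : (m : ℝ) - n ≤ 1 + N / K := by
    rwa [abs_of_pos hmn0] at hclose
  -- upper bound on D
  have hDub : D < 1 / 2 := by
    have h4 : iteratedDerivWithin k f s c * ((m : ℝ) - n) ≤ A * lam * (1 + N / K) := by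
      have := mul_le_mul hhi hmn' hmn0.le hAl0.le
      linarith
    have h5 : A * lam * (1 + N / K) < 1 / 2 := by
      have he : A * lam * (1 + N / K) = A * lam + A * lam * (N / K) := by ring
      rw [he]; linarith
    rw [hDeq, div_lt_iff₀ hfc0]
    linarith
  have hDlb : lam * ((m : ℝ) - n) / fc ≤ D := by
    rw [hDeq]
    gcongr
  rw [abs_of_pos hmn0]
  by_cases hcase : D ≤ 4 * (H : ℝ) ^ ((1 : ℝ) - (k : ℝ))
  · rw [hεP] at hcase
    have hchain : lam * ((m : ℝ) - n) / fc ≤ 4 / P := by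
      calc lam * ((m : ℝ) - n) / fc ≤ D := hDlb
        _ ≤ 4 * P⁻¹ := hcase
        _ = 4 / P := by ring
    have hmul : lam * ((m : ℝ) - n) * P ≤ 4 * fc := (div_le_div_iff₀ hfc0 hP0).mp hchain
    rw [le_div_iff₀ (by positivity)]
    rw [show ((m : ℝ) - n) * (lam * P) = lam * ((m : ℝ) - n) * P by ring]
    exact hmul
  · exfalso
    push_neg at hcase
    have hε0 : 0 < 4 * (H : ℝ) ^ ((1 : ℝ) - (k : ℝ)) := by
      rw [hεP]; positivity
    have hDpos : 0 < D := lt_trans hε0 hcase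
    have hnear' : |D - round D| ≤ 4 * (H : ℝ) ^ ((1 : ℝ) - (k : ℝ)) := hnear
    have hround : (1 : ℤ) ≤ round D := by
      by_contra h
      push_neg at h
      have hle : round D ≤ 0 := by omega
      have hler : ((round D : ℤ) : ℝ) ≤ 0 := by exact_mod_cast hle
      have : D ≤ |D - round D| := le_trans (by linarith) (le_abs_self _)
      linarith
    have hroundr : (1 : ℝ) ≤ ((round D : ℤ) : ℝ) := by exact_mod_cast hround
    have habs := abs_sub_round D
    have := abs_le.1 habs
    linarith

/-- Let `k ≥ 3`, `N ≥ 1`, and let `f` have continuous derivatives up to order `k` on `[0,N]`,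
with `0 < λk ≤ f⁽ᵏ⁾ ≤ A λk` on `(0,N)`, `A ≥ 1`, `A λk ≤ 1/4`.  Put `H = ⌊(Aλk)^{-1/k}⌋` and
`K = 1 + ⌊4Aλk N⌋`.  If `m, n ≤ N` are positive integers with `|m − n| ≤ 1 + N/K` and
`‖f⁽ᵏ⁻¹⁾(m)/(k-1)! − f⁽ᵏ⁻¹⁾(n)/(k-1)!‖ ≤ 4H^{1-k}`, then `|m − n| ≤ 4(k-1)!/(λk H^{k-1})`. -/
theorem close_pairs (k : ℕ) (N A lam : ℝ) (f : ℝ → ℝ) (H K : ℕ)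
    (hk : 3 ≤ k) (hN : 1 ≤ N) (hA : 1 ≤ A) (hlam : 0 < lam) (hAl : A * lam ≤ 1 / 4)
    (hf : ContDiffOn ℝ k f (Set.Icc 0 N))
    (hfk : ∀ x ∈ Set.Ioo (0 : ℝ) N,
      lam ≤ iteratedDerivWithin k f (Set.Icc 0 N) x ∧
      iteratedDerivWithin k f (Set.Icc 0 N) x ≤ A * lam)
    (hH : H = ⌊(A * lam) ^ (-(1 : ℝ) / (k : ℝ))⌋₊)
    (hK : K = 1 + ⌊4 * A * lam * N⌋₊)
    (m n : ℕ) (hm : 1 ≤ m) (hmN : (m : ℝ) ≤ N) (hn : 1 ≤ n) (hnN : (n : ℝ) ≤ N)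
    (hclose : |(m : ℝ) - (n : ℝ)| ≤ 1 + N / (K : ℝ))
    (hnear : distNearestInt
        (iteratedDerivWithin (k - 1) f (Set.Icc 0 N) m / ((k - 1).factorial : ℝ)
          - iteratedDerivWithin (k - 1) f (Set.Icc 0 N) n / ((k - 1).factorial : ℝ)) ≤
        4 * (H : ℝ) ^ ((1 : ℝ) - (k : ℝ))) :
    |(m : ℝ) - (n : ℝ)| ≤ 4 * ((k - 1).factorial : ℝ) / (lam * (H : ℝ) ^ ((k : ℝ) - 1)) := by
  rcases lt_trichotomy n m with hlt | heq | hlt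
  · exact close_pairs_aux k N A lam f H K hk hN hA hlam hAl hf hfk hH hK m n hmN hlt hclose hnear
  · subst heq
    simp only [sub_self, abs_zero]
    positivity
  · rw [abs_sub_comm]
    rw [abs_sub_comm] at hclose
    rw [distNearestInt_sub_comm] at hnear
    exact close_pairs_aux k N A lam f H K hk hN hA hlam hAl hf hfk hH hK n m hnN hlt hclose hnear
end
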